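/- Let P_n be the weighted path graph on n vertices whose k-th edge (between vertices k and k+1) has resistance r_k = 1/2^{k-1}. Then the Kirchhoff index of P_n, i.e., the sum over all pairs of vertices of the resistance distance (which for a path equals the sum of edge resistances along the path between them), equals 4n − 12 + (n+3)/2^{n-2} for n ≥ 2. -/

import Mathlib

open Finset

lemma aux_T (n : ℕ) (hn : 1 ≤ n) :
    ∑ i ∈ Finset.Icc 1 n, ∑ k ∈ Finset.Icc i n, (1 : ℝ) / 2 ^ (k - 1)
      = 4 - ((n : ℝ) + 2) / 2 ^ (n - 1) := by
  induction n, hn using Nat.le_induction with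
  | base => norm_num
  | succ n hn ih =>
    have h1 : ∀ i ∈ Finset.Icc 1 n,
        ∑ k ∈ Finset.Icc i (n+1), (1 : ℝ) / 2 ^ (k - 1)
          = (∑ k ∈ Finset.Icc i n, (1 : ℝ) / 2 ^ (k - 1)) + 1 / 2 ^ n := by
      intro i hi
      rw [Finset.mem_Icc] at hi
      rw [Finset.sum_Icc_succ_top (by omega : i ≤ n + 1)]
      simp
    rw [Finset.sum_Icc_succ_top (by omega : 1 ≤ n + 1),
      Finset.sum_congr rfl h1, Finset.sum_add_distrib, ih]
    have h2 : Finset.Icc (n+1) (n+1) = {n+1} := Finset.Icc_self _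
    rw [h2]
    simp only [Finset.sum_const, Nat.card_Icc, Finset.sum_singleton, nsmul_eq_mul,
      Nat.add_sub_cancel]
    have hp : (2 : ℝ) ^ n = 2 * 2 ^ (n - 1) := by
      rw [← pow_succ']
      congr 1
      omega
    have hpos : (2 : ℝ) ^ (n - 1) ≠ 0 := by positivity
    rw [hp]
    push_cast
    field_simp
    ring

theorem stmt_12 (n : ℕ) (hn : 2 ≤ n) :
    ∑ i ∈ Finset.Icc 1 n, ∑ j ∈ Finset.Icc (i+1) n,
        (∑ k ∈ Finset.Icc i (j-1), (1 : ℝ) / 2 ^ (k - 1))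
      = 4 * n - 12 + ((n : ℝ) + 3) / 2 ^ (n - 2) := by
  induction n, hn using Nat.le_induction with
  | base =>
    norm_num [Finset.Icc_self, show Finset.Icc 1 2 = {1, 2} by decide]
  | succ n hn ih =>
    have h1 : ∀ i ∈ Finset.Icc 1 n,
        ∑ j ∈ Finset.Icc (i+1) (n+1),
            (∑ k ∈ Finset.Icc i (j-1), (1 : ℝ) / 2 ^ (k - 1))
          = (∑ j ∈ Finset.Icc (i+1) n,
              (∑ k ∈ Finset.Icc i (j-1), (1 : ℝ) / 2 ^ (k - 1)))
            + ∑ k ∈ Finset.Icc i n, (1 : ℝ) / 2 ^ (k - 1) := by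
      intro i hi
      rw [Finset.mem_Icc] at hi
      rw [Finset.sum_Icc_succ_top (by omega : i + 1 ≤ n + 1)]
      norm_num
    rw [Finset.sum_Icc_succ_top (by omega : 1 ≤ n + 1),
      Finset.sum_congr rfl h1, Finset.sum_add_distrib, ih, aux_T n (by omega)]
    have he : Finset.Icc (n+1+1) (n+1) = ∅ := Finset.Icc_eq_empty (by omega)
    rw [he, Finset.sum_empty, add_zero]
    have h2 : n + 1 - 2 = n - 1 := by omega
    rw [h2]
    have h3 : n - 2 + 1 = n - 1 := by omega
    have hp : (2 : ℝ) ^ (n - 1) = 2 * 2 ^ (n - 2) := by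
      rw [← pow_succ', h3]
    rw [hp]
    have hpos : (2 : ℝ) ^ (n - 2) ≠ 0 := by positivity
    push_cast
    field_simp
    ring
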